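/- Let η ∈ (0,1), let σ be a real number, and let K₁, K₂, M, K̃₁ be d × d real symmetric matrices. Set K̂₁ = K₁ + σ²·I and K̂₂ = K₂ + σ²·I. Suppose K₂ ⪯ M ⪯ K₁, (1 − η)·K̂₁ ⪯ K̂₂, and (1 − η/4)·K̂₁ ⪯ K̃₁ ⪯ (1 + η/4)·K̂₁. Then (1 − η/4)·(M + σ²·I) ⪯ K̃₁ ⪯ ((1 + η/4)/(1 − η))·(M + σ²·I). -/

import Mathlib

/-- The Loewner partial order on real square matrices: `M ⪯ N` iff `N - M` is
positive semidefinite. -/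
def LoewnerLE {d : ℕ} (M N : Matrix (Fin d) (Fin d) ℝ) : Prop := (N - M).PosSemidef

lemma psd_smul {d : ℕ} {A : Matrix (Fin d) (Fin d) ℝ} {c : ℝ} (hc : 0 ≤ c)
    (h : A.PosSemidef) : (c • A).PosSemidef := by
  rw [Matrix.posSemidef_iff_dotProduct_mulVec] at h ⊢
  refine ⟨?_, fun x => ?_⟩
  · have h1 := h.1
    unfold Matrix.IsHermitian at *
    rw [Matrix.conjTranspose_smul, h1]
    simp
  have := h.2 x
  simp only [Matrix.smul_mulVec, dotProduct_smul, smul_eq_mul]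
  exact mul_nonneg hc this

lemma loewner_trans {d : ℕ} {A B C : Matrix (Fin d) (Fin d) ℝ}
    (h1 : LoewnerLE A B) (h2 : LoewnerLE B C) : LoewnerLE A C := by
  have := h2.add h1
  simpa [LoewnerLE, sub_add_sub_cancel] using this

lemma loewner_smul {d : ℕ} {A B : Matrix (Fin d) (Fin d) ℝ} {c : ℝ} (hc : 0 ≤ c)
    (h : LoewnerLE A B) : LoewnerLE (c • A) (c • B) := by
  have := psd_smul hc h
  simpa [LoewnerLE, smul_sub] using this

theorem stmt7 (d : ℕ) (η σ : ℝ) (hη0 : 0 < η) (hη1 : η < 1)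
    (K₁ K₂ M Kt₁ : Matrix (Fin d) (Fin d) ℝ)
    (hK₁ : K₁.IsSymm) (hK₂ : K₂.IsSymm) (hM : M.IsSymm) (hKt₁ : Kt₁.IsSymm)
    (Kh₁ Kh₂ : Matrix (Fin d) (Fin d) ℝ)
    (hKh₁ : Kh₁ = K₁ + σ ^ 2 • (1 : Matrix (Fin d) (Fin d) ℝ))
    (hKh₂ : Kh₂ = K₂ + σ ^ 2 • (1 : Matrix (Fin d) (Fin d) ℝ))
    (hsand₁ : LoewnerLE K₂ M) (hsand₂ : LoewnerLE M K₁)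
    (hhist : LoewnerLE ((1 - η) • Kh₁) Kh₂)
    (happrox₁ : LoewnerLE ((1 - η / 4) • Kh₁) Kt₁)
    (happrox₂ : LoewnerLE Kt₁ ((1 + η / 4) • Kh₁)) :
    LoewnerLE ((1 - η / 4) • (M + σ ^ 2 • (1 : Matrix (Fin d) (Fin d) ℝ))) Kt₁ ∧
      LoewnerLE Kt₁ (((1 + η / 4) / (1 - η)) • (M + σ ^ 2 • (1 : Matrix (Fin d) (Fin d) ℝ))) := by
  set Mh := M + σ ^ 2 • (1 : Matrix (Fin d) (Fin d) ℝ) with hMh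
  have hηlt4 : η / 4 < 1 := by linarith
  have hc1 : (0:ℝ) ≤ 1 - η / 4 := by linarith
  have hc2 : (0:ℝ) ≤ (1 + η / 4) / (1 - η) := div_nonneg (by linarith) (by linarith)
  -- Mh ⪯ Kh₁
  have hMhK₁ : LoewnerLE Mh Kh₁ := by
    have : Kh₁ - Mh = K₁ - M := by rw [hKh₁, hMh]; abel
    unfold LoewnerLE; rw [this]; exact hsand₂
  -- Kh₂ ⪯ Mh
  have hK₂Mh : LoewnerLE Kh₂ Mh := by
    have : Mh - Kh₂ = M - K₂ := by rw [hKh₂, hMh]; abel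
    unfold LoewnerLE; rw [this]; exact hsand₁
  constructor
  · exact loewner_trans (loewner_smul hc1 hMhK₁) happrox₁
  · have h1 : LoewnerLE ((1 - η) • Kh₁) Mh := loewner_trans hhist hK₂Mh
    have h2 := loewner_smul hc2 h1
    have heq : ((1 + η / 4) / (1 - η)) • ((1 - η) • Kh₁) = (1 + η / 4) • Kh₁ := by
      rw [smul_smul]; congr 1
      have hne : (1:ℝ) - η ≠ 0 := by linarith
      field_simp
    rw [heq] at h2
    exact loewner_trans happrox₂ h2
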